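/- Let KB = (∅, Π) be a normal logic program. Then the well-founded semantics of KB as an FOL-program coincides with the standard well-founded semantics of the normal logic program Π: lfp(W_KB) = lfp(W_Π). -/

import Mathlib

/-!
Formalization of FOL-programs (combined knowledge bases `KB = (L, Π)` of a
first-order theory and a ground rule base) and their well-founded semantics.

* The Herbrand base `HB_Π` is modelled as a type `Atom`; each atom `a` has an
  associated first-order sentence `toSent a`, and `inOmega a` says whether the
  predicate symbol of `a` is in the shared set `Ω` (atoms with `¬ inOmega a`
  are the *ordinary* atoms).
* The field `atomic` expresses that atoms are genuinely atomic ground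
  sentences: every consistent set of literals is a satisfiable theory.
* Literals `Lit Atom = Atom ⊕ Atom`: `Sum.inl a` is the atom `a`,
  `Sum.inr a` is the negated atom `¬ a`.
-/

open FirstOrder

namespace FOLProg

variable {L : FirstOrder.Language} {Atom : Type*}

/-- Literals over the Herbrand base: `Sum.inl a` is `a`, `Sum.inr a` is `¬ a`. -/
abbrev Lit (Atom : Type*) := Atom ⊕ Atom

/-- A body element of a rule: an atom of the Herbrand base, or an FOL sentence. -/
inductive BElem (L : FirstOrder.Language) (Atom : Type*) where
  | atom : Atom → BElem L Atom
  | fol : L.Sentence → BElem L Atom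

/-- A ground rule `head ← pos, not neg`. -/
structure Rule (L : FirstOrder.Language) (Atom : Type*) where
  head : Atom
  pos : Set (BElem L Atom)
  neg : Set (BElem L Atom)

/-- `S⁺`. -/
def litPos (S : Set (Lit Atom)) : Set Atom := {a | Sum.inl a ∈ S}

/-- `S⁻`. -/
def litNeg (S : Set (Lit Atom)) : Set Atom := {a | Sum.inr a ∈ S}

/-- A set of literals is consistent: `S⁺ ∩ S⁻ = ∅`. -/
def LitConsistent (S : Set (Lit Atom)) : Prop := litPos S ∩ litNeg S = ∅

/-- The theory of *all* literals of `S` (positive atoms as their sentences,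
negative ones negated). -/
def litTheory (toSent : Atom → L.Sentence) (S : Set (Lit Atom)) : L.Theory :=
  toSent '' litPos S ∪ (fun a => (toSent a).not) '' litNeg S

/-- An FOL-program `KB = (L, Π)` over the Herbrand base `Atom`. -/
structure KB (L : FirstOrder.Language) (Atom : Type*) where
  /-- the first-order theory `L` -/
  theory : L.Theory
  /-- the first-order sentence of each ground atom of the Herbrand base -/
  toSent : Atom → L.Sentence
  /-- whether the predicate symbol of an atom belongs to `Ω` -/
  inOmega : Atom → Prop
  /-- the rule base `Π` -/
  rules : Set (Rule L Atom)
  /-- atoms are atomic: any consistent set of ground literals is satisfiable -/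
  atomic : ∀ S : Set (Lit Atom), LitConsistent S → (litTheory toSent S).IsSatisfiable

namespace KB

variable (kb : KB L Atom)

/-- `S|_Ω`, as a first-order theory. -/
def restrict (S : Set (Lit Atom)) : L.Theory :=
  kb.toSent '' {a | Sum.inl a ∈ S ∧ kb.inOmega a} ∪
    (fun a => (kb.toSent a).not) '' {a | Sum.inr a ∈ S ∧ kb.inOmega a}

/-- The theory `L ∪ S|_Ω`. -/
def extTheory (S : Set (Lit Atom)) : L.Theory := kb.theory ∪ kb.restrict S

/-- `S` is consistent with `L` (equivalently, `S ∪ L` is consistent):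
`S` is a consistent set of literals and `L ∪ S|_Ω` is satisfiable. -/
def ConsistentWith (S : Set (Lit Atom)) : Prop :=
  LitConsistent S ∧ (kb.extTheory S).IsSatisfiable

/-- The FOL-formulas among a set of body elements, as sentences: the explicit
FOL-formulas together with the (sentences of the) non-ordinary atoms. -/
def folOf (s : Set (BElem L Atom)) : Set L.Sentence :=
  {φ | BElem.fol φ ∈ s} ∪ kb.toSent '' {a | BElem.atom a ∈ s ∧ kb.inOmega a}

/-- Conditions (a) and (b) of the definition of an unfounded set `U` of `KB`
relative to a set of literals `I` (the case where `I ∪ L` is consistent). -/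
def UnfoundedCond (I : Set (Lit Atom)) (U : Set Atom) : Prop :=
  ∀ H ∈ U,
    (∀ r ∈ kb.rules, r.head = H →
      -- (i) `¬A ∈ I ∪ ¬.U` for some ordinary atom `A ∈ pos(r)`
      (∃ a, BElem.atom a ∈ r.pos ∧ ¬ kb.inOmega a ∧ (Sum.inr a ∈ I ∨ a ∈ U)) ∨
      -- (ii) `B ∈ I` for some ordinary atom `B ∈ neg(r)`
      (∃ b, BElem.atom b ∈ r.neg ∧ ¬ kb.inOmega b ∧ Sum.inl b ∈ I) ∨
      -- (iii) some FOL-formula `A ∈ pos(r)` is not entailed under any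
      -- consistent extension of `I ∪ ¬.U`
      (∃ φ ∈ kb.folOf r.pos, ∀ S : Set (Lit Atom), LitConsistent S →
        I ∪ Sum.inr '' U ⊆ S → ¬ kb.extTheory S ⊨ᵇ φ) ∨
      -- (iv) some FOL-formula `A ∈ neg(r)` with `L ∪ I|_Ω ⊨ A`
      (∃ φ ∈ kb.folOf r.neg, kb.extTheory I ⊨ᵇ φ)) ∧
    -- (b) `L ∪ S|_Ω ⊭ H` for all consistent `S ⊇ I ∪ ¬.U`
    (∀ S : Set (Lit Atom), LitConsistent S → I ∪ Sum.inr '' U ⊆ S →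
      ¬ kb.extTheory S ⊨ᵇ kb.toSent H)

/-- `U` is an unfounded set of `KB` relative to `I`.  If `I ∪ L` is
inconsistent, the unfounded set is (by definition) the whole Herbrand base. -/
def IsUnfounded (I : Set (Lit Atom)) (U : Set Atom) : Prop :=
  (kb.ConsistentWith I ∧ kb.UnfoundedCond I U) ∨
    (¬ kb.ConsistentWith I ∧ U = Set.univ)

/-- The consequence operator `T_KB`. -/
def TOp (I : Set (Lit Atom)) : Set Atom :=
  {H | ¬ kb.ConsistentWith I ∨
    -- (a) some rule `r` with `head(r) = H` whose body holds
    (∃ r ∈ kb.rules, r.head = H ∧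
      (∀ a, BElem.atom a ∈ r.pos → ¬ kb.inOmega a → Sum.inl a ∈ I) ∧
      (∀ a, BElem.atom a ∈ r.neg → ¬ kb.inOmega a → Sum.inr a ∈ I) ∧
      (∀ φ ∈ kb.folOf r.pos, kb.extTheory I ⊨ᵇ φ) ∧
      (∀ φ ∈ kb.folOf r.neg, ∀ S : Set (Lit Atom), LitConsistent S → I ⊆ S →
        ¬ kb.extTheory S ⊨ᵇ φ)) ∨
    -- (b) `L ∪ I|_Ω ⊨ H`
    kb.extTheory I ⊨ᵇ kb.toSent H}

/-- `U_KB(I)`: the greatest unfounded set of `KB` relative to `I`, i.e. the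
union of all unfounded sets of `KB` relative to `I`. -/
def UOp (I : Set (Lit Atom)) : Set Atom := ⋃₀ {U | kb.IsUnfounded I U}

/-- `Z_KB(I) = {A ∈ HB_Π | L ∪ I|_Ω ⊨ ¬A}`: direct negative consequences. -/
def ZOp (I : Set (Lit Atom)) : Set Atom :=
  {a | kb.extTheory I ⊨ᵇ (kb.toSent a).not}

/-- `W_KB(I) = T_KB(I) ∪ ¬.U_KB(I) ∪ ¬.Z_KB(I)`. -/
def WOp (I : Set (Lit Atom)) : Set (Lit Atom) :=
  Sum.inl '' kb.TOp I ∪ Sum.inr '' kb.UOp I ∪ Sum.inr '' kb.ZOp I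

/-- The well-founded semantics of `KB`: the least fixpoint of `W_KB`
(by Knaster–Tarski, the intersection of all prefixed points). -/
def wfs : Set (Lit Atom) := sInf {I | kb.WOp I ⊆ I}

/-! ### Standard notions for normal logic programs -/

/-- `KB = (∅, Π)` is a normal logic program: the first-order theory is empty
and every rule has only ordinary atoms in its head and body (hence `Ω = ∅`). -/
def IsNormal : Prop :=
  kb.theory = ∅ ∧ (∀ a : Atom, ¬ kb.inOmega a) ∧
    ∀ r ∈ kb.rules, ∀ e ∈ r.pos ∪ r.neg, ∃ a, e = BElem.atom a

/-- The standard immediate-consequence operator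
`T_Π(S) = {head(r) | r ∈ Π, pos(r) ∪ ¬.neg(r) ⊆ S}` of a normal program. -/
def StdT (S : Set (Lit Atom)) : Set Atom :=
  {H | ∃ r ∈ kb.rules, r.head = H ∧
    (∀ a, BElem.atom a ∈ r.pos → Sum.inl a ∈ S) ∧
    (∀ a, BElem.atom a ∈ r.neg → Sum.inr a ∈ S)}

/-- `U` is an unfounded set of the normal program `Π` w.r.t. `S` in the
standard sense. -/
def StdUnfounded (S : Set (Lit Atom)) (U : Set Atom) : Prop :=
  ∀ a ∈ U, ∀ r ∈ kb.rules, r.head = a →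
    (∃ b, BElem.atom b ∈ r.pos ∧ (Sum.inr b ∈ S ∨ b ∈ U)) ∨
    (∃ b, BElem.atom b ∈ r.neg ∧ Sum.inl b ∈ S)

/-- `U_Π(S)`: the greatest standard unfounded set of `Π` w.r.t. `S`. -/
def StdU (S : Set (Lit Atom)) : Set Atom := ⋃₀ {U | kb.StdUnfounded S U}

/-- `W_Π(S) = T_Π(S) ∪ ¬.U_Π(S)`. -/
def StdW (S : Set (Lit Atom)) : Set (Lit Atom) :=
  Sum.inl '' kb.StdT S ∪ Sum.inr '' kb.StdU S

/-- The standard well-founded semantics `lfp(W_Π)` of the normal program `Π`. -/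
def stdWfs : Set (Lit Atom) := sInf {S | kb.StdW S ⊆ S}

/-! ### Two-valued satisfaction and well-supported answer sets -/

/-- The theory `L ∪ I|_Ω ∪ ¬.Ī|_Ω` of a total interpretation `I ⊆ HB_Π`. -/
def totTheory (I : Set Atom) : L.Theory :=
  kb.theory ∪ kb.toSent '' {a | a ∈ I ∧ kb.inOmega a} ∪
    (fun a => (kb.toSent a).not) '' {a | a ∉ I ∧ kb.inOmega a}

/-- `I ⊨_L e` for a total interpretation `I` and a body element `e`:
membership for ordinary atoms, entailment from `L ∪ I|_Ω ∪ ¬.Ī|_Ω` for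
FOL-formulas (including non-ordinary atoms). -/
def sat2 (I : Set Atom) : BElem L Atom → Prop
  | .atom a => (¬ kb.inOmega a ∧ a ∈ I) ∨
      (kb.inOmega a ∧ kb.totTheory I ⊨ᵇ kb.toSent a)
  | .fol φ => kb.totTheory I ⊨ᵇ φ

/-- `I ⊨_L body(r)`. -/
def satBody (I : Set Atom) (r : Rule L Atom) : Prop :=
  (∀ e ∈ r.pos, kb.sat2 I e) ∧ (∀ e ∈ r.neg, ¬ kb.sat2 I e)

/-- `I` is a model of `KB`: `I` is consistent with `L` and satisfies all
rules of `Π`. -/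
def IsModel (I : Set Atom) : Prop :=
  (kb.totTheory I).IsSatisfiable ∧
    ∀ r ∈ kb.rules, kb.satBody I r → kb.sat2 I (BElem.atom r.head)

/-- Up-to satisfaction `(E, I) ⊨_L e` of a positive body element. -/
def upSat (E I : Set Atom) (e : BElem L Atom) : Prop :=
  ∀ F : Set Atom, E ⊆ F → F ⊆ I → kb.sat2 F e

/-- `(E, I) ⊨_L body(r)`. -/
def upBody (E I : Set Atom) (r : Rule L Atom) : Prop :=
  (∀ e ∈ r.pos, kb.upSat E I e) ∧
    (∀ e ∈ r.neg, ∀ F : Set Atom, E ⊆ F → F ⊆ I → ¬ kb.sat2 F e)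

/-- `𝒯_KB(E, I) = {head(r) | r ∈ Π, (E, I) ⊨_L body(r)}`. -/
def TcOp (E I : Set Atom) : Set Atom :=
  {H | ∃ r ∈ kb.rules, r.head = H ∧ kb.upBody E I r}

/-- `𝒯^α_KB(∅, I)`: the least fixpoint of `𝒯_KB(·, I)`. -/
def Talpha (I : Set Atom) : Set Atom := sInf {E | kb.TcOp E I ⊆ E}

/-- The theory `L ∪ 𝒯^α_KB(∅, I)|_Ω ∪ ¬.Ī|_Ω`. -/
def wsTheory (I : Set Atom) : L.Theory :=
  kb.theory ∪ kb.toSent '' {a | a ∈ kb.Talpha I ∧ kb.inOmega a} ∪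
    (fun a => (kb.toSent a).not) '' {a | a ∉ I ∧ kb.inOmega a}

/-- `I` is a well-supported answer set of `KB`. -/
def IsWSAnswerSet (I : Set Atom) : Prop :=
  kb.IsModel I ∧ ∀ a ∈ I, a ∈ kb.Talpha I ∨ kb.wsTheory I ⊨ᵇ kb.toSent a

/-- The sequence `𝒯⁰ = ∅`, `𝒯^{k+1} = 𝒯_KB(𝒯^k, I)`. -/
def Titer (I : Set Atom) : ℕ → Set Atom
  | 0 => ∅
  | n + 1 => kb.TcOp (Titer I n) I

/-- The sequence `W⁰ = ∅`, `W^{k+1} = W_KB(W^k)`. -/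
def Witer : ℕ → Set (Lit Atom)
  | 0 => ∅
  | n + 1 => kb.WOp (Witer n)

/-- The sequence `E₀ = ∅`, `E_i = {H ∈ HB_Π | (𝒯^{i-1}, I) ⊨_L H}`. -/
def Eseq (I : Set Atom) : ℕ → Set Atom
  | 0 => ∅
  | n + 1 => {H | kb.upSat (kb.Titer I n) I (BElem.atom H)}

end KB


/-! ### Auxiliary lemmas for Statement 10 -/

section Aux

variable {L' : FirstOrder.Language} {A : Type*} (kb : KB L' A)

open Set FirstOrder.Language

/-- Monotonicity of `StdT`. -/
private lemma stdT_mono : Monotone kb.StdT := by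
  rintro S S' h H ⟨r, hr, hh, hp, hn⟩
  exact ⟨r, hr, hh, fun a ha => h (hp a ha), fun a ha => h (hn a ha)⟩

/-- Monotonicity of standard unfoundedness in the interpretation. -/
private lemma stdUnfounded_mono {S S' : Set (Lit A)} (h : S ⊆ S') {U : Set A}
    (hU : kb.StdUnfounded S U) : kb.StdUnfounded S' U := by
  intro a ha r hr hhd
  rcases hU a ha r hr hhd with ⟨b, hb, hb2 | hb2⟩ | ⟨b, hb, hb2⟩
  · exact Or.inl ⟨b, hb, Or.inl (h hb2)⟩
  · exact Or.inl ⟨b, hb, Or.inr hb2⟩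
  · exact Or.inr ⟨b, hb, h hb2⟩

private lemma stdW_mono : Monotone kb.StdW := by
  intro S S' h
  apply Set.union_subset_union
  · exact Set.image_mono (stdT_mono kb h)
  · refine Set.image_mono ?_
    rintro a ⟨U, hU, haU⟩
    exact ⟨U, stdUnfounded_mono kb h hU, haU⟩

/-- `StdW` as an order hom. -/
private def stdWHom : Set (Lit A) →o Set (Lit A) := ⟨kb.StdW, stdW_mono kb⟩

private lemma inl_stdW {S : Set (Lit A)} {a : A} (h : Sum.inl a ∈ kb.StdW S) :
    a ∈ kb.StdT S := by
  rcases h with ⟨c, hc, hcc⟩ | ⟨c, hc, hcc⟩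
  · cases hcc; exact hc
  · cases hcc

private lemma inr_stdW {S : Set (Lit A)} {a : A} (h : Sum.inr a ∈ kb.StdW S) :
    a ∈ kb.StdU S := by
  rcases h with ⟨c, hc, hcc⟩ | ⟨c, hc, hcc⟩
  · cases hcc
  · cases hcc; exact hc

/-- The standard well-founded semantics of a normal program is consistent. -/
private lemma stdWfs_consistent : LitConsistent kb.stdWfs := by
  classical
  set f := stdWHom kb with hf
  have mem_iter : ∀ (i : Ordinal) (l : Lit A),
      l ∈ OrdinalApprox.lfpApprox f ⊥ i ↔
        ∃ j < i, l ∈ kb.StdW (OrdinalApprox.lfpApprox f ⊥ j) := by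
    intro i l
    conv_lhs => rw [OrdinalApprox.lfpApprox]
    simp only [bot_sup_eq, Set.iSup_eq_iUnion, Set.mem_iUnion, exists_prop]
    exact Iff.rfl
  -- Lemma A': atoms derivable at stage `i` are not in any unfounded set
  -- relative to a consistent superset of stage `i`.
  have noU : ∀ i : Ordinal, ∀ a, a ∈ kb.StdT (OrdinalApprox.lfpApprox f ⊥ i) →
      ∀ T U, OrdinalApprox.lfpApprox f ⊥ i ⊆ T → LitConsistent T →
      kb.StdUnfounded T U → a ∉ U := by
    intro i
    induction i using Ordinal.induction with
    | h i IH =>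
      intro a haT T U hsub hcons hunf haU
      obtain ⟨r, hr, hh, hpos, hneg⟩ := haT
      subst hh
      have hcons' : litPos T ∩ litNeg T = ∅ := hcons
      rcases hunf _ haU r hr rfl with ⟨b, hb, hb2 | hb2⟩ | ⟨b, hb, hb2⟩
      · have h1 : Sum.inl b ∈ T := hsub (hpos b hb)
        have : b ∈ litPos T ∩ litNeg T := ⟨h1, hb2⟩
        rw [hcons'] at this
        exact this
      · have h1 := hpos b hb
        rcases (mem_iter i _).mp h1 with ⟨j, hj, hbW⟩
        exact IH j hj b (inl_stdW kb hbW) T U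
          ((OrdinalApprox.lfpApprox_mono_right f (x := ⊥) hj.le).trans hsub) hcons hunf hb2
      · have h1 : Sum.inr b ∈ T := hsub (hneg b hb)
        have : b ∈ litPos T ∩ litNeg T := ⟨hb2, h1⟩
        rw [hcons'] at this
        exact this
  -- Lemma B: every iterate is consistent.
  have iterCons : ∀ i : Ordinal, LitConsistent (OrdinalApprox.lfpApprox f ⊥ i) := by
    intro i
    induction i using Ordinal.induction with
    | h i IH =>
      show litPos _ ∩ litNeg _ = ∅
      ext a
      simp only [Set.mem_inter_iff, Set.mem_empty_iff_false, iff_false, not_and]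
      intro hpos hneg
      rcases (mem_iter i _).mp hpos with ⟨j, hj, hjW⟩
      rcases (mem_iter i _).mp hneg with ⟨k, hk, hkW⟩
      have haT := inl_stdW kb hjW
      obtain ⟨U, hU, haU⟩ := inr_stdW kb hkW
      have hjm : OrdinalApprox.lfpApprox f ⊥ j ⊆ OrdinalApprox.lfpApprox f ⊥ (max j k) :=
        OrdinalApprox.lfpApprox_mono_right f (x := ⊥) (le_max_left j k)
      have hkm : OrdinalApprox.lfpApprox f ⊥ k ⊆ OrdinalApprox.lfpApprox f ⊥ (max j k) :=
        OrdinalApprox.lfpApprox_mono_right f (x := ⊥) (le_max_right j k)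
      exact noU j a haT _ U hjm (IH (max j k) (max_lt hj hk))
        (stdUnfounded_mono kb hkm hU) haU
  obtain ⟨i, hi⟩ := OrdinalApprox.lfp_mem_range_lfpApprox f
  have hwfs : kb.stdWfs = OrderHom.lfp f := rfl
  rw [hwfs, ← hi]
  exact iterCons i

/-! ### Normal programs: the FOL machinery trivializes -/

private lemma extTheory_empty (h1 : kb.theory = ∅) (h2 : ∀ a, ¬ kb.inOmega a)
    (S : Set (Lit A)) : kb.extTheory S = ∅ := by
  have e1 : {a | Sum.inl a ∈ S ∧ kb.inOmega a} = (∅ : Set A) := by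
    ext a; simp [h2 a]
  have e2 : {a | Sum.inr a ∈ S ∧ kb.inOmega a} = (∅ : Set A) := by
    ext a; simp [h2 a]
  unfold KB.extTheory KB.restrict
  rw [h1, e1, e2]
  simp

private lemma sat_empty (kb : KB L' A) : (∅ : L'.Theory).IsSatisfiable := by
  have hcons : LitConsistent (∅ : Set (Lit A)) := by
    show litPos (∅ : Set (Lit A)) ∩ litNeg ∅ = ∅
    ext a; simp [litPos, litNeg]
  exact (kb.atomic ∅ hcons).mono (Set.empty_subset _)

private lemma sat_atom (a : A) : ({kb.toSent a} : L'.Theory).IsSatisfiable := by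
  have hcons : LitConsistent ({Sum.inl a} : Set (Lit A)) := by
    show litPos _ ∩ litNeg _ = ∅
    ext b; simp [litPos, litNeg]
  have h := kb.atomic {Sum.inl a} hcons
  have e : litTheory kb.toSent {Sum.inl a} = {kb.toSent a} := by
    unfold litTheory
    have e1 : litPos ({Sum.inl a} : Set (Lit A)) = {a} := by ext b; simp [litPos]
    have e2 : litNeg ({Sum.inl a} : Set (Lit A)) = ∅ := by ext b; simp [litNeg]
    rw [e1, e2]; simp
  rwa [e] at h

private lemma sat_not_atom (a : A) :
    ({(kb.toSent a).not} : L'.Theory).IsSatisfiable := by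
  have hcons : LitConsistent ({Sum.inr a} : Set (Lit A)) := by
    show litPos _ ∩ litNeg _ = ∅
    ext b; simp [litPos, litNeg]
  have h := kb.atomic {Sum.inr a} hcons
  have e : litTheory kb.toSent {Sum.inr a} = {(kb.toSent a).not} := by
    unfold litTheory
    have e1 : litPos ({Sum.inr a} : Set (Lit A)) = ∅ := by ext b; simp [litPos]
    have e2 : litNeg ({Sum.inr a} : Set (Lit A)) = {a} := by ext b; simp [litNeg]
    rw [e1, e2]; simp
  rwa [e] at h

private lemma not_entails_atom (a : A) : ¬ (∅ : L'.Theory) ⊨ᵇ kb.toSent a := by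
  intro hmod
  obtain ⟨M⟩ := sat_not_atom kb a
  haveI : (M : Type _) ⊨ (∅ : L'.Theory) := ⟨fun φ hφ => absurd hφ (Set.notMem_empty _)⟩
  have h1 : (M : Type _) ⊨ (kb.toSent a).not := M.is_model.realize_of_mem _ (Set.mem_singleton _)
  rw [FirstOrder.Language.Sentence.realize_not] at h1
  exact h1 (hmod.realize_sentence M)

private lemma not_entails_not_atom (a : A) : ¬ (∅ : L'.Theory) ⊨ᵇ (kb.toSent a).not := by
  intro hmod
  obtain ⟨M⟩ := sat_atom kb a
  haveI : (M : Type _) ⊨ (∅ : L'.Theory) := ⟨fun φ hφ => absurd hφ (Set.notMem_empty _)⟩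
  have h1 : (M : Type _) ⊨ (kb.toSent a).not := hmod.realize_sentence M
  rw [FirstOrder.Language.Sentence.realize_not] at h1
  exact h1 (M.is_model.realize_of_mem _ (Set.mem_singleton _))

private lemma folOf_pos_empty (hN : kb.IsNormal) {r : Rule L' A} (hr : r ∈ kb.rules) :
    kb.folOf r.pos = ∅ := by
  obtain ⟨_, h2, h3⟩ := hN
  ext φ
  simp only [KB.folOf, Set.mem_union, Set.mem_setOf_eq, Set.mem_image,
    Set.mem_empty_iff_false, iff_false]
  rintro (hf | ⟨a, ⟨_, hΩ⟩, rfl⟩)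
  · obtain ⟨a, ha⟩ := h3 r hr _ (Or.inl hf)
    cases ha
  · exact h2 a hΩ

private lemma folOf_neg_empty (hN : kb.IsNormal) {r : Rule L' A} (hr : r ∈ kb.rules) :
    kb.folOf r.neg = ∅ := by
  obtain ⟨_, h2, h3⟩ := hN
  ext φ
  simp only [KB.folOf, Set.mem_union, Set.mem_setOf_eq, Set.mem_image,
    Set.mem_empty_iff_false, iff_false]
  rintro (hf | ⟨a, ⟨_, hΩ⟩, rfl⟩)
  · obtain ⟨a, ha⟩ := h3 r hr _ (Or.inr hf)
    cases ha
  · exact h2 a hΩ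

private lemma consistentWith_iff (hN : kb.IsNormal) (I : Set (Lit A)) :
    kb.ConsistentWith I ↔ LitConsistent I := by
  unfold KB.ConsistentWith
  rw [extTheory_empty kb hN.1 hN.2.1 I]
  exact and_iff_left (sat_empty kb)

private lemma TOp_eq (hN : kb.IsNormal) {I : Set (Lit A)} (hI : LitConsistent I) :
    kb.TOp I = kb.StdT I := by
  obtain ⟨h1, h2, h3⟩ := hN
  have hC : kb.ConsistentWith I := (consistentWith_iff kb ⟨h1, h2, h3⟩ I).mpr hI
  ext H
  simp only [KB.TOp, KB.StdT, Set.mem_setOf_eq]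
  constructor
  · rintro (hc | ⟨r, hr, hh, c1, c2, _, _⟩ | hb)
    · exact absurd hC hc
    · exact ⟨r, hr, hh, fun a ha => c1 a ha (h2 a), fun a ha => c2 a ha (h2 a)⟩
    · rw [extTheory_empty kb h1 h2 I] at hb
      exact absurd hb (not_entails_atom kb H)
  · rintro ⟨r, hr, hh, c1, c2⟩
    refine Or.inr (Or.inl ⟨r, hr, hh, fun a ha _ => c1 a ha, fun a ha _ => c2 a ha, ?_, ?_⟩)
    · rw [folOf_pos_empty kb ⟨h1, h2, h3⟩ hr]
      exact fun φ h => h.elim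
    · rw [folOf_neg_empty kb ⟨h1, h2, h3⟩ hr]
      exact fun φ h => h.elim

private lemma isUnfounded_iff (hN : kb.IsNormal) {I : Set (Lit A)}
    (hI : LitConsistent I) (U : Set A) :
    kb.IsUnfounded I U ↔ kb.StdUnfounded I U := by
  obtain ⟨h1, h2, h3⟩ := hN
  have hC : kb.ConsistentWith I := (consistentWith_iff kb ⟨h1, h2, h3⟩ I).mpr hI
  unfold KB.IsUnfounded
  simp only [hC, not_true_eq_false, false_and, or_false, true_and]
  constructor
  · intro h a ha r hr hh
    rcases (h a ha).1 r hr hh with ⟨b, hb, _, hc⟩ | ⟨b, hb, _, hc⟩ | ⟨φ, hφ, _⟩ | ⟨φ, hφ, _⟩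
    · exact Or.inl ⟨b, hb, hc⟩
    · exact Or.inr ⟨b, hb, hc⟩
    · rw [folOf_pos_empty kb ⟨h1, h2, h3⟩ hr] at hφ
      exact hφ.elim
    · rw [folOf_neg_empty kb ⟨h1, h2, h3⟩ hr] at hφ
      exact hφ.elim
  · intro h H hH
    refine ⟨fun r hr hh => ?_, fun S hS hsub hent => ?_⟩
    · rcases h H hH r hr hh with ⟨b, hb, hc⟩ | ⟨b, hb, hc⟩
      · exact Or.inl ⟨b, hb, h2 b, hc⟩
      · exact Or.inr (Or.inl ⟨b, hb, h2 b, hc⟩)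
    · rw [extTheory_empty kb h1 h2 S] at hent
      exact not_entails_atom kb H hent

private lemma WOp_eq (hN : kb.IsNormal) {I : Set (Lit A)} (hI : LitConsistent I) :
    kb.WOp I = kb.StdW I := by
  have hU : kb.UOp I = kb.StdU I := by
    ext a
    constructor
    · rintro ⟨U, hU, ha⟩
      exact ⟨U, (isUnfounded_iff kb hN hI U).mp hU, ha⟩
    · rintro ⟨U, hU, ha⟩
      exact ⟨U, (isUnfounded_iff kb hN hI U).mpr hU, ha⟩
  have hZ : kb.ZOp I = ∅ := by
    ext a
    simp only [KB.ZOp, Set.mem_setOf_eq, Set.mem_empty_iff_false, iff_false]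
    rw [extTheory_empty kb hN.1 hN.2.1 I]
    exact not_entails_not_atom kb a
  unfold KB.WOp KB.StdW
  rw [TOp_eq kb hN hI, hU, hZ]
  simp

private lemma WOp_univ (hN : kb.IsNormal) {I : Set (Lit A)} (hI : ¬ LitConsistent I) :
    kb.WOp I = Set.univ := by
  have hC : ¬ kb.ConsistentWith I := fun h => hI ((consistentWith_iff kb hN I).mp h)
  apply Set.eq_univ_of_forall
  intro l
  cases l with
  | inl a => exact Or.inl (Or.inl ⟨a, Or.inl hC, rfl⟩)
  | inr a => exact Or.inl (Or.inr ⟨a, ⟨Set.univ, Or.inr ⟨hC, rfl⟩, trivial⟩, rfl⟩)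

end Aux

/-- For a normal logic program `KB = (∅, Π)`, the well-founded
semantics of `KB` coincides with the standard well-founded semantics of `Π`:
`lfp(W_KB) = lfp(W_Π)`. -/
theorem normal_wfs_eq_stdWfs {L : FirstOrder.Language} {Atom : Type*}
    (kb : KB L Atom) (hN : kb.IsNormal) :
    kb.wfs = kb.stdWfs := by
  apply le_antisymm
  · -- wfs ⊆ stdWfs : stdWfs is a prefixed point of W_KB
    apply sInf_le
    have hcons : LitConsistent kb.stdWfs := stdWfs_consistent kb
    have hpre : kb.StdW kb.stdWfs ⊆ kb.stdWfs :=
      le_sInf fun S hS => le_trans (stdW_mono kb (sInf_le hS)) hS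
    show kb.WOp kb.stdWfs ⊆ kb.stdWfs
    rw [WOp_eq kb hN hcons]
    exact hpre
  · -- stdWfs ⊆ wfs
    apply le_sInf
    intro I hI
    by_cases hc : LitConsistent I
    · exact sInf_le (show kb.StdW I ⊆ I by rw [← WOp_eq kb hN hc]; exact hI)
    · have huniv : Set.univ ⊆ I := by rw [← WOp_univ kb hN hc]; exact hI
      exact fun l _ => huniv (Set.mem_univ l)

end FOLProg
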